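/- Let H_Ω be the real 4×3 matrix with rows (1,1,1), (1,1,−1), (1,−1,1), (1,−1,−1), and let H_E be the real 4×3 matrix with rows (1,0,1), (1,0,−1), (1,1,0), (1,−1,0). Then there is no entrywise nonnegative real 4×4 matrix σ such that H_Eᵀ · σ · H_Ω equals the 3×3 identity matrix. (Consequently, the Boxworld fragment of Example 3 admits no simplicial-cone embedding, i.e., no classical explanation.) -/

import Mathlib

open Matrix

theorem boxworld_no_simplicial_cone_embedding :
    let HΩ : Matrix (Fin 4) (Fin 3) ℝ := !![1, 1, 1; 1, 1, -1; 1, -1, 1; 1, -1, -1]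
    let HE : Matrix (Fin 4) (Fin 3) ℝ := !![1, 0, 1; 1, 0, -1; 1, 1, 0; 1, -1, 0]
    ¬ ∃ σ : Matrix (Fin 4) (Fin 4) ℝ, (∀ i j, 0 ≤ σ i j) ∧
      HEᵀ * σ * HΩ = (1 : Matrix (Fin 3) (Fin 3) ℝ) := by
  intro HΩ HE
  rintro ⟨σ, hpos, heq⟩
  have hT : HEᵀ = !![1,1,1,1; 0,0,1,-1; 1,-1,0,0] := by
    ext i j; fin_cases i <;> fin_cases j <;> rfl
  rw [hT] at heq
  have e := fun a b => congrFun (congrFun heq a) b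
  have e00 := e 0 0
  have e01 := e 0 1
  have e02 := e 0 2
  have e10 := e 1 0
  have e11 := e 1 1
  have e12 := e 1 2
  have e20 := e 2 0
  have e21 := e 2 1
  have e22 := e 2 2
  simp only [HΩ] at e00 e01 e02 e10 e11 e12 e20 e21 e22
  norm_num [Matrix.mul_apply, Fin.sum_univ_four, Fin.sum_univ_three,
    Matrix.one_apply, Matrix.vecMul, dotProduct, Matrix.vecHead, Matrix.vecTail,
    Matrix.cons_val_zero, Matrix.cons_val_one, Matrix.cons_val_two, Matrix.cons_val_three,
    Function.comp] at e00 e01 e02 e10 e11 e12 e20 e21 e22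
  have p := fun i j => hpos i j
  linarith [p 0 0, p 0 1, p 0 2, p 0 3, p 1 0, p 1 1, p 1 2, p 1 3,
    p 2 0, p 2 1, p 2 2, p 2 3, p 3 0, p 3 1, p 3 2, p 3 3,
    e00, e01, e02, e10, e11, e12, e20, e21, e22]
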